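/- Let k and k' be fields of characteristic p such that the elements fixed by the p-power Frobenius in each are exactly F_p, and suppose k ⊗_{F_p} k' is reduced. If u ∈ k ⊗_{F_p} k' satisfies φ_1(u) = u and φ_2(u) = u (the two partial Frobenii), then u ∈ F_p. -/

import Mathlib

open scoped TensorProduct

/-- The Frobenius `x ↦ x ^ p` as a `ZMod p`-algebra homomorphism. -/
noncomputable def frobAlgHom (p : ℕ) [Fact p.Prime] (k : Type*) [CommRing k]
    [Algebra (ZMod p) k] [CharP k p] : k →ₐ[ZMod p] k :=
  AlgHom.mk' (frobenius k p) (fun c x => by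
    simp only [Algebra.smul_def, map_mul]
    congr 1
    rw [frobenius_def, ← map_pow, ZMod.pow_card])

/-- Let `k`, `k'` be fields of characteristic `p` whose Frobenius-fixed elements are
exactly `𝔽_p`, with `k ⊗[𝔽_p] k'` reduced. Any element fixed by both partial
Frobenii lies in `𝔽_p`. -/
theorem fixed_by_partial_frobenii_mem_Fp (p : ℕ) [Fact p.Prime]
    (k k' : Type*) [Field k] [Field k'] [Algebra (ZMod p) k] [Algebra (ZMod p) k']
    [CharP k p] [CharP k' p]
    (hk : ∀ x : k, x ^ p = x → ∃ c : ZMod p, algebraMap (ZMod p) k c = x)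
    (hk' : ∀ x : k', x ^ p = x → ∃ c : ZMod p, algebraMap (ZMod p) k' c = x)
    (hred : IsReduced (k ⊗[ZMod p] k'))
    (u : k ⊗[ZMod p] k')
    (h1 : Algebra.TensorProduct.map (frobAlgHom p k) (AlgHom.id (ZMod p) k') u = u)
    (h2 : Algebra.TensorProduct.map (AlgHom.id (ZMod p) k) (frobAlgHom p k') u = u) :
    ∃ c : ZMod p, algebraMap (ZMod p) (k ⊗[ZMod p] k') c = u := by
  classical
  set b := Module.Basis.ofVectorSpace (ZMod p) k' with hb
  set B : Module.Basis _ k (k ⊗[ZMod p] k') := b.baseChange k with hB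
  set f := B.repr u with hf
  set φ1 := Algebra.TensorProduct.map (frobAlgHom p k) (AlgHom.id (ZMod p) k') with hφ1
  have hu : u = f.sum fun i a => a • B i := by
    conv_lhs => rw [← B.linearCombination_repr u]
    rw [Finsupp.linearCombination_apply]
  -- φ1 raises the coordinates to the p-th power
  have hφu : φ1 u = f.sum fun i a => (a ^ p) • B i := by
    rw [hu, map_finsuppSum]
    refine Finsupp.sum_congr fun i _ => ?_
    have : (B i : k ⊗[ZMod p] k') = 1 ⊗ₜ[ZMod p] b i := Module.Basis.baseChange_apply k b i
    have hsm : ∀ a : k, a • B i = a ⊗ₜ[ZMod p] b i := fun a => by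
      rw [this, TensorProduct.smul_tmul', smul_eq_mul, mul_one]
    rw [hsm, hsm]
    simp [hφ1, frobAlgHom, frobenius_def]
  have hrepr : (f.sum fun i a => Finsupp.single i (a ^ p)) = f := by
    calc (f.sum fun i a => Finsupp.single i (a ^ p))
        = B.repr (f.sum fun i a => (a ^ p) • B i) := by
          rw [map_finsuppSum]
          refine (Finsupp.sum_congr fun i _ => ?_)
          rw [map_smul, B.repr_self, Finsupp.smul_single, smul_eq_mul, mul_one]
      _ = B.repr (φ1 u) := by rw [hφu]
      _ = f := by rw [h1, hf]
  have key : ∀ j, (f j) ^ p = f j := by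
    intro j
    have h := congrArg (fun g : _ →₀ k => g j) hrepr
    simp only [Finsupp.sum_apply, Finsupp.sum, Finset.sum_apply', Finsupp.single_apply] at h
    rw [Finset.sum_ite_eq' f.support j (fun i => (f i) ^ p)] at h
    by_cases hj : j ∈ f.support
    · rwa [if_pos hj] at h
    · have : f j = 0 := Finsupp.notMem_support_iff.mp hj
      rw [this, zero_pow (Nat.Prime.ne_zero Fact.out)]
  -- pick the F_p coordinates
  have hg : ∀ j, ∃ c : ZMod p, algebraMap (ZMod p) k c = f j := fun j => hk (f j) (key j)
  choose g hgspec using hg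
  set d : k' := ∑ i ∈ f.support, g i • b i with hd
  have hud : u = 1 ⊗ₜ[ZMod p] d := by
    rw [hd, TensorProduct.tmul_sum, hu, Finsupp.sum]
    refine Finset.sum_congr rfl fun i _ => ?_
    rw [TensorProduct.tmul_smul, ← Module.Basis.baseChange_apply k b i, ← hB,
      ← algebraMap_smul k (g i) (B i), hgspec]
  -- now use h2
  have hdp : (1 : k) ⊗ₜ[ZMod p] (d ^ p) = 1 ⊗ₜ[ZMod p] d := by
    have := h2
    rw [hud] at this
    simpa only [Algebra.TensorProduct.map_tmul, AlgHom.coe_id, id_eq,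
      show (frobAlgHom p k') d = d ^ p from rfl] using this
  have hinj : Function.Injective (algebraMap (ZMod p) k) := (algebraMap (ZMod p) k).injective
  have hdd : d ^ p = d := by
    apply b.repr.injective
    ext i
    have h := congrArg (fun v => B.repr v i) hdp
    simp only [hB, Module.Basis.baseChange_repr_tmul, smul_eq_mul] at h
    apply hinj
    simpa [Algebra.algebraMap_eq_smul_one] using h
  obtain ⟨c, hc⟩ := hk' d hdd
  refine ⟨c, ?_⟩
  have h1t : algebraMap (ZMod p) (k ⊗[ZMod p] k') c
      = (1 : k) ⊗ₜ[ZMod p] (algebraMap (ZMod p) k' c) := by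
    rw [← (Algebra.TensorProduct.includeRight (R := ZMod p) (A := k) (B := k')).commutes c]
    rfl
  rw [h1t, hc, ← hud]
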